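/- If the state ρ commutes with every A_i, or every A_i commutes with every B_f, then the operational quasiprobability q^OQ_{if}(ρ) is nonnegative for all i, f (a probability distribution). -/

import Mathlib

open Matrix ComplexOrder

lemma trace_psd_nonneg {n : Type*} [Fintype n] [DecidableEq n]
    {M : Matrix n n ℂ} (h : M.PosSemidef) : 0 ≤ M.trace := by
  rw [Matrix.trace]
  refine Finset.sum_nonneg fun i _ => ?_
  exact h.diag_nonneg

open scoped MatrixOrder in
lemma trace_mul_psd_nonneg {n : Type*} [Fintype n] [DecidableEq n]
    {X Y : Matrix n n ℂ} (hX : X.PosSemidef) (hY : Y.PosSemidef) :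
    0 ≤ (X * Y).trace := by
  set sX := CFC.sqrt X
  set sY := CFC.sqrt Y
  have hXeq : X = sX * sX := (CFC.sqrt_mul_sqrt_self X hX.nonneg).symm
  have hYeq : Y = sY * sY := (CFC.sqrt_mul_sqrt_self Y hY.nonneg).symm
  have hXh : sXᴴ = sX := (CFC.sqrt_nonneg X).posSemidef.isHermitian
  have hYh : sYᴴ = sY := (CFC.sqrt_nonneg Y).posSemidef.isHermitian
  have key : (X * Y).trace = ((sX * sY) * (sX * sY)ᴴ).trace := by
    rw [hXeq, hYeq, conjTranspose_mul, hXh, hYh]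
    rw [show sX * sX * (sY * sY) = sX * (sX * sY * sY) by noncomm_ring,
      Matrix.trace_mul_comm]
    congr 1
    noncomm_ring
  rw [key]
  exact trace_psd_nonneg (posSemidef_self_mul_conjTranspose _)

/-- If `ρ` commutes with every `A_i`, or every `A_i` commutes with
every `B_f`, then `q^OQ_{if} = Tr(ρ A_i B_f) ≥ 0` for all `i, f`. -/
theorem oq_nonneg_of_commute (d : ℕ) (hd : 0 < d)
    (ρ : Matrix (Fin d) (Fin d) ℂ) (hρ : ρ.PosSemidef) (hρtr : ρ.trace = 1)
    (A : Fin d → Matrix (Fin d) (Fin d) ℂ)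
    (hAherm : ∀ i, (A i).IsHermitian) (hAproj : ∀ i, A i * A i = A i)
    (hAsum : ∑ i, A i = 1)
    (B : Fin d → Matrix (Fin d) (Fin d) ℂ)
    (hBpos : ∀ f, (B f).PosSemidef) (hBsum : ∑ f, B f = 1)
    (hcomm : (∀ i, ρ * A i = A i * ρ) ∨ (∀ i f, A i * B f = B f * A i))
    (q : Fin d → Fin d → ℂ)
    (hq : ∀ i f, q i f = (A i * ρ * A i * B f).trace +
      (1 / (d : ℂ)) * ((ρ * B f).trace - ∑ i', (A i' * ρ * A i' * B f).trace)) :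
    ∀ i f, q i f = (ρ * A i * B f).trace ∧ 0 ≤ q i f := by
  -- in both cases, Tr(A i ρ A i B f) = Tr(ρ A i B f)
  have key : ∀ i f, (A i * ρ * A i * B f).trace = (ρ * A i * B f).trace := by
    rcases hcomm with h | h
    · intro i f
      rw [← h i,
        show ρ * A i * A i * B f = ρ * (A i * A i) * B f by noncomm_ring,
        hAproj i]
    · intro i f
      calc (A i * ρ * A i * B f).trace
          = ((A i * ρ) * (B f * A i)).trace := by
            rw [← h i f]; congr 1; noncomm_ring
        _ = ((B f * A i) * (A i * ρ)).trace := Matrix.trace_mul_comm _ _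
        _ = (B f * (A i * A i) * ρ).trace := by congr 1; noncomm_ring
        _ = (ρ * (B f * A i)).trace := by
            rw [hAproj i, Matrix.trace_mul_comm]
        _ = (ρ * A i * B f).trace := by rw [← h i f]; congr 1; noncomm_ring
  -- the correction term vanishes
  have corr : ∀ f, ∑ i', (A i' * ρ * A i' * B f).trace = (ρ * B f).trace := by
    intro f
    simp only [key]
    rw [← Matrix.trace_sum]
    congr 1
    rw [← Finset.sum_mul, ← Finset.mul_sum, hAsum, mul_one]
  intro i f
  have hqv : q i f = (ρ * A i * B f).trace := by
    rw [hq i f, corr f, sub_self, mul_zero, add_zero, key]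
  refine ⟨hqv, ?_⟩
  rw [hqv, ← key i f]
  have hpsd : (A i * ρ * A i).PosSemidef := by
    have := hρ.conjTranspose_mul_mul_same (A i)
    rwa [(hAherm i).eq] at this
  rw [show A i * ρ * A i * B f = (A i * ρ * A i) * B f from rfl]
  exact trace_mul_psd_nonneg hpsd (hBpos f)
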